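/- Let W, D be n×n real matrices with nonnegative entries, let α, β ≥ 0 satisfy α ≤ 1/(4‖W‖₁) and β ≤ 1/(4‖D‖₁), and let γ ∈ (0, 1]. Define the damped GRASP operator Ĝ(s) := (1 − γ)s + γ·G(s). Then Ĝ maps S = {s ∈ ℝ^n : ‖s − 1‖_∞ ≤ 1} into itself, the fixed points of Ĝ in S coincide with the fixed points of G in S, and for every s₀ ∈ S the damped iteration s_{k+1} = Ĝ(s_k) converges to the unique fixed point s* of G in S. -/

import Mathlib

open Finset

/-- Maximum absolute column sum norm `‖A‖₁ = max_j ∑_i |A_{ij}|`. -/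
noncomputable def matNorm1 {n : ℕ} (A : Matrix (Fin n) (Fin n) ℝ) : ℝ :=
  ⨆ j, ∑ i, |A i j|

/-- The GRASP operator `G(s)_i = (1 + β (Dᵀ s)_i) / (1 + α (Wᵀ s)_i)`. -/
noncomputable def grasp {n : ℕ} (W D : Matrix (Fin n) (Fin n) ℝ) (α β : ℝ)
    (s : Fin n → ℝ) : Fin n → ℝ :=
  fun i => (1 + β * ∑ k, D k i * s k) / (1 + α * ∑ k, W k i * s k)

/-- The damped GRASP operator `Ĝ(s) = (1 - γ) s + γ G(s)`. -/
noncomputable def graspDamped {n : ℕ} (W D : Matrix (Fin n) (Fin n) ℝ) (α β γ : ℝ)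
    (s : Fin n → ℝ) : Fin n → ℝ :=
  (1 - γ) • s + γ • grasp W D α β s

/-- Key algebraic contraction estimate for the ratio function. -/
lemma grasp_key_est (a b c e d : ℝ) (ha : 0 ≤ a) (hb : 0 ≤ b) (hc : 0 ≤ c)
    (ha' : a ≤ 1/2) (hc' : c ≤ 1/2)
    (hab : |a - b| ≤ d/4) (hce : |c - e| ≤ d/4) (hd : 0 ≤ d) :
    |(1+c)/(1+a) - (1+e)/(1+b)| ≤ 3/4 * d := by
  have h1a : (0:ℝ) < 1 + a := by linarith
  have h1b : (0:ℝ) < 1 + b := by linarith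
  have key : (1+c)/(1+a) - (1+e)/(1+b)
      = ((c-e)+(b-a)+c*(b-a)+a*(c-e))/((1+a)*(1+b)) := by
    field_simp
    ring
  rw [key, abs_div]
  have hden : (1:ℝ) ≤ |(1+a)*(1+b)| := by
    rw [abs_of_pos (by positivity)]
    nlinarith
  have hnum : |(c-e)+(b-a)+c*(b-a)+a*(c-e)| ≤ 3/4 * d := by
    obtain ⟨h1, h2⟩ := abs_le.mp hab
    obtain ⟨h3, h4⟩ := abs_le.mp hce
    rw [abs_le]
    constructor <;> nlinarith [mul_nonneg hc (by linarith : (0:ℝ) ≤ d/4 - (b - a)),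
      mul_nonneg hc (by linarith : (0:ℝ) ≤ (b - a) + d/4),
      mul_nonneg ha (by linarith : (0:ℝ) ≤ d/4 - (c - e)),
      mul_nonneg ha (by linarith : (0:ℝ) ≤ (c - e) + d/4)]
  calc |(c-e)+(b-a)+c*(b-a)+a*(c-e)| / |(1+a)*(1+b)|
      ≤ |(c-e)+(b-a)+c*(b-a)+a*(c-e)| / 1 :=
        div_le_div_of_nonneg_left (abs_nonneg _) one_pos hden |>.trans_eq rfl
        |>.trans (le_refl _)
    _ ≤ 3/4 * d := by simpa using hnum

theorem grasp_damped_convergence {n : ℕ} (W D : Matrix (Fin n) (Fin n) ℝ)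
    (hW : ∀ i j, 0 ≤ W i j) (hD : ∀ i j, 0 ≤ D i j)
    (α β : ℝ) (hα : 0 ≤ α) (hβ : 0 ≤ β)
    (hα' : α ≤ 1 / (4 * matNorm1 W)) (hβ' : β ≤ 1 / (4 * matNorm1 D))
    (γ : ℝ) (hγ0 : 0 < γ) (hγ1 : γ ≤ 1) :
    (∀ s : Fin n → ℝ, ‖s - 1‖ ≤ 1 → ‖graspDamped W D α β γ s - 1‖ ≤ 1) ∧
    (∀ s : Fin n → ℝ, ‖s - 1‖ ≤ 1 →
      (graspDamped W D α β γ s = s ↔ grasp W D α β s = s)) ∧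
    ∃ s : Fin n → ℝ, ‖s - 1‖ ≤ 1 ∧ grasp W D α β s = s ∧
      (∀ s' : Fin n → ℝ, ‖s' - 1‖ ≤ 1 → grasp W D α β s' = s' → s' = s) ∧
      ∀ s₀ : Fin n → ℝ, ‖s₀ - 1‖ ≤ 1 →
        Filter.Tendsto (fun k => (graspDamped W D α β γ)^[k] s₀)
          Filter.atTop (nhds s) := by
  -- column sum bounds
  have colbound : ∀ (A : Matrix (Fin n) (Fin n) ℝ), (∀ i j, 0 ≤ A i j) →
      ∀ (δ : ℝ), 0 ≤ δ → δ ≤ 1 / (4 * matNorm1 A) → ∀ i, δ * ∑ k, A k i ≤ 1/4 := by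
    intro A hA δ hδ hδ' i
    have hc0 : 0 ≤ ∑ k, A k i := Finset.sum_nonneg fun k _ => hA k i
    have hcM : ∑ k, |A k i| ≤ matNorm1 A := by
      rw [matNorm1]
      exact le_ciSup (Set.Finite.bddAbove (Set.finite_range fun j => ∑ k, |A k j|)) i
    have hcM' : ∑ k, A k i ≤ matNorm1 A := by
      calc ∑ k, A k i = ∑ k, |A k i| := by
            exact Finset.sum_congr rfl fun k _ => (abs_of_nonneg (hA k i)).symm
        _ ≤ matNorm1 A := hcM
    rcases (hc0.trans hcM').eq_or_lt with hM | hM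
    · have : ∑ k, A k i = 0 := le_antisymm (hcM'.trans hM.symm.le) hc0
      rw [this, mul_zero]; norm_num
    · rw [le_div_iff₀ (by positivity)] at hδ'
      nlinarith [mul_le_mul_of_nonneg_left hcM' hδ]
  have hWcol := colbound W hW α hα hα'
  have hDcol := colbound D hD β hβ hβ'
  -- membership facts
  have hmem : ∀ s : Fin n → ℝ, ‖s - 1‖ ≤ 1 → ∀ i, 0 ≤ s i ∧ s i ≤ 2 := by
    intro s hs i
    have h := (norm_le_pi_norm (s - 1) i).trans hs
    simp only [Pi.sub_apply, Pi.one_apply, Real.norm_eq_abs] at h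
    obtain ⟨h1, h2⟩ := abs_le.mp h
    constructor <;> linarith
  -- bounds on affine sums for s ∈ S
  have hsum : ∀ (A : Matrix (Fin n) (Fin n) ℝ), (∀ i j, 0 ≤ A i j) →
      ∀ (δ : ℝ), 0 ≤ δ → (∀ i, δ * ∑ k, A k i ≤ 1/4) →
      ∀ s : Fin n → ℝ, ‖s - 1‖ ≤ 1 → ∀ i,
        0 ≤ δ * ∑ k, A k i * s k ∧ δ * ∑ k, A k i * s k ≤ 1/2 := by
    intro A hA δ hδ hcol s hs i
    have hb := hmem s hs
    constructor
    · exact mul_nonneg hδ (Finset.sum_nonneg fun k _ =>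
        mul_nonneg (hA k i) (hb k).1)
    · have h1 : ∑ k, A k i * s k ≤ ∑ k, A k i * 2 :=
        Finset.sum_le_sum fun k _ =>
          mul_le_mul_of_nonneg_left (hb k).2 (hA k i)
      have h2 : δ * ∑ k, A k i * s k ≤ δ * (∑ k, A k i * 2) :=
        mul_le_mul_of_nonneg_left h1 hδ
      have h3 : δ * (∑ k, A k i * 2) = 2 * (δ * ∑ k, A k i) := by
        rw [← Finset.sum_mul]; ring
      nlinarith [hcol i]
  have hWsum := hsum W hW α hα hWcol
  have hDsum := hsum D hD β hβ hDcol
  -- range of G on S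
  have hGrange : ∀ s : Fin n → ℝ, ‖s - 1‖ ≤ 1 → ∀ i,
      |grasp W D α β s i - 1| ≤ 1/2 := by
    intro s hs i
    obtain ⟨ha0, ha1⟩ := hWsum s hs i
    obtain ⟨hb0, hb1⟩ := hDsum s hs i
    have hden : (0:ℝ) < 1 + α * ∑ k, W k i * s k := by linarith
    rw [grasp, abs_le]
    constructor
    · rw [le_sub_iff_add_le, le_div_iff₀ hden]
      nlinarith
    · rw [sub_le_iff_le_add, div_le_iff₀ hden]
      nlinarith
  -- G maps S into S (with margin 1/2)
  have hGS : ∀ s : Fin n → ℝ, ‖s - 1‖ ≤ 1 → ‖grasp W D α β s - 1‖ ≤ 1/2 := by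
    intro s hs
    rw [pi_norm_le_iff_of_nonneg (by norm_num)]
    intro i
    simpa [Real.norm_eq_abs] using hGrange s hs i
  -- Ĝ maps S into S
  have hdecomp : ∀ s : Fin n → ℝ, graspDamped W D α β γ s - 1
      = (1 - γ) • (s - 1) + γ • (grasp W D α β s - 1) := by
    intro s
    funext i
    simp only [graspDamped, Pi.add_apply, Pi.sub_apply, Pi.smul_apply, Pi.one_apply,
      smul_eq_mul]
    ring
  have hDS : ∀ s : Fin n → ℝ, ‖s - 1‖ ≤ 1 → ‖graspDamped W D α β γ s - 1‖ ≤ 1 := by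
    intro s hs
    rw [hdecomp]
    calc ‖(1 - γ) • (s - 1) + γ • (grasp W D α β s - 1)‖
        ≤ ‖(1 - γ) • (s - 1)‖ + ‖γ • (grasp W D α β s - 1)‖ := norm_add_le _ _
      _ = |1 - γ| * ‖s - 1‖ + |γ| * ‖grasp W D α β s - 1‖ := by
          rw [norm_smul, norm_smul, Real.norm_eq_abs, Real.norm_eq_abs]
      _ ≤ (1 - γ) * 1 + γ * (1/2) := by
          rw [abs_of_nonneg (by linarith), abs_of_nonneg hγ0.le]
          have := hGS s hs
          gcongr <;> linarith
      _ ≤ 1 := by linarith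
  -- pointwise contraction of G
  have hGcontr : ∀ s t : Fin n → ℝ, ‖s - 1‖ ≤ 1 → ‖t - 1‖ ≤ 1 → ∀ i,
      |grasp W D α β s i - grasp W D α β t i| ≤ 3/4 * ‖s - t‖ := by
    intro s t hs ht i
    have hd : (0:ℝ) ≤ ‖s - t‖ := norm_nonneg _
    have hdiff : ∀ (A : Matrix (Fin n) (Fin n) ℝ), (∀ i j, 0 ≤ A i j) →
        ∀ (δ : ℝ), 0 ≤ δ → (∀ i, δ * ∑ k, A k i ≤ 1/4) →
        |δ * ∑ k, A k i * s k - δ * ∑ k, A k i * t k| ≤ ‖s - t‖ / 4 := by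
      intro A hA δ hδ hcol
      rw [← mul_sub, abs_mul, abs_of_nonneg hδ, ← Finset.sum_sub_distrib]
      have h1 : |∑ k, (A k i * s k - A k i * t k)| ≤ (∑ k, A k i) * ‖s - t‖ := by
        refine (Finset.abs_sum_le_sum_abs _ _).trans ?_
        rw [Finset.sum_mul]
        refine Finset.sum_le_sum fun k _ => ?_
        rw [← mul_sub, abs_mul, abs_of_nonneg (hA k i)]
        refine mul_le_mul_of_nonneg_left ?_ (hA k i)
        have := norm_le_pi_norm (s - t) k
        simpa [Real.norm_eq_abs] using this
      have h2 : δ * |∑ k, (A k i * s k - A k i * t k)|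
          ≤ δ * ((∑ k, A k i) * ‖s - t‖) := mul_le_mul_of_nonneg_left h1 hδ
      have h3 : δ * ((∑ k, A k i) * ‖s - t‖) = (δ * ∑ k, A k i) * ‖s - t‖ := by ring
      have h4 : (δ * ∑ k, A k i) * ‖s - t‖ ≤ (1/4) * ‖s - t‖ :=
        mul_le_mul_of_nonneg_right (hcol i) hd
      linarith
    have hWd := hdiff W hW α hα hWcol
    have hDd := hdiff D hD β hβ hDcol
    obtain ⟨ha0, ha1⟩ := hWsum s hs i
    obtain ⟨hb0, _⟩ := hWsum t ht i
    obtain ⟨hc0, hc1⟩ := hDsum s hs i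
    simp only [grasp]
    have := grasp_key_est (α * ∑ k, W k i * s k) (α * ∑ k, W k i * t k)
      (β * ∑ k, D k i * s k) (β * ∑ k, D k i * t k) ‖s - t‖
      ha0 hb0 hc0 ha1 hc1 (by simpa [div_div] using hWd) (by simpa using hDd) hd
    convert this using 3 <;> ring
  -- contraction of Ĝ on S
  have hDcontr : ∀ s t : Fin n → ℝ, ‖s - 1‖ ≤ 1 → ‖t - 1‖ ≤ 1 →
      ‖graspDamped W D α β γ s - graspDamped W D α β γ t‖ ≤ (1 - γ/4) * ‖s - t‖ := by
    intro s t hs ht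
    have hd : (0:ℝ) ≤ ‖s - t‖ := norm_nonneg _
    rw [pi_norm_le_iff_of_nonneg (by nlinarith)]
    intro i
    have hi : (graspDamped W D α β γ s - graspDamped W D α β γ t) i
        = (1 - γ) * (s i - t i) + γ * (grasp W D α β s i - grasp W D α β t i) := by
      simp only [graspDamped, Pi.sub_apply, Pi.add_apply, Pi.smul_apply, smul_eq_mul]
      ring
    rw [hi, Real.norm_eq_abs]
    have h1 : |s i - t i| ≤ ‖s - t‖ := by
      have := norm_le_pi_norm (s - t) i
      simpa [Real.norm_eq_abs] using this
    have h2 := hGcontr s t hs ht i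
    calc |(1 - γ) * (s i - t i) + γ * (grasp W D α β s i - grasp W D α β t i)|
        ≤ |(1 - γ) * (s i - t i)| + |γ * (grasp W D α β s i - grasp W D α β t i)| :=
          abs_add_le _ _
      _ = (1 - γ) * |s i - t i| + γ * |grasp W D α β s i - grasp W D α β t i| := by
          rw [abs_mul, abs_mul, abs_of_nonneg (by linarith : (0:ℝ) ≤ 1 - γ),
            abs_of_nonneg hγ0.le]
      _ ≤ (1 - γ) * ‖s - t‖ + γ * (3/4 * ‖s - t‖) := by
          gcongr <;> linarith
      _ = (1 - γ/4) * ‖s - t‖ := by ring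
  -- fixed points of Ĝ coincide with those of G
  have hfix : ∀ s : Fin n → ℝ,
      (graspDamped W D α β γ s = s ↔ grasp W D α β s = s) := by
    intro s
    constructor
    · intro h
      have h2 : γ • grasp W D α β s = γ • s := by
        funext i
        have := congrFun h i
        simp only [graspDamped, Pi.add_apply, Pi.smul_apply, smul_eq_mul] at this ⊢
        linarith [this]
      exact smul_right_injective (Fin n → ℝ) (ne_of_gt hγ0) h2
    · intro h
      funext i
      simp only [graspDamped, Pi.add_apply, Pi.smul_apply, smul_eq_mul,
        congrFun h i]
      ring
  -- set up the complete metric space on the closed ball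
  set S : Set (Fin n → ℝ) := Metric.closedBall (1 : Fin n → ℝ) 1 with hSdef
  have hmemS : ∀ s : Fin n → ℝ, s ∈ S ↔ ‖s - 1‖ ≤ 1 := by
    intro s
    rw [hSdef, Metric.mem_closedBall, dist_eq_norm]
  haveI : CompleteSpace S := Metric.isClosed_closedBall.completeSpace_coe
  haveI : Nonempty S := ⟨⟨1, by simp [hSdef]⟩⟩
  set f : S → S := fun x => ⟨graspDamped W D α β γ x.1,
    (hmemS _).mpr (hDS x.1 ((hmemS _).mp x.2))⟩ with hfdef
  have hK1 : (0:ℝ) ≤ 1 - γ/4 := by linarith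
  set K : NNReal := ⟨1 - γ/4, hK1⟩ with hKdef
  have hC : ContractingWith K f := by
    constructor
    · rw [← NNReal.coe_lt_coe]
      simp only [hKdef, NNReal.coe_one, NNReal.coe_mk]
      show (1 - γ/4 : ℝ) < 1
      linarith
    · refine LipschitzWith.of_dist_le_mul fun x y => ?_
      rw [Subtype.dist_eq, dist_eq_norm, Subtype.dist_eq, dist_eq_norm]
      exact hDcontr x.1 y.1 ((hmemS _).mp x.2) ((hmemS _).mp y.2)
  set sstar : S := ContractingWith.fixedPoint f hC with hsstar
  have hfp : graspDamped W D α β γ sstar.1 = sstar.1 := by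
    have := hC.fixedPoint_isFixedPt
    rw [← hsstar] at this
    exact congrArg Subtype.val this
  have hiter : ∀ (s₀ : S) (k : ℕ), (f^[k] s₀).1 = (graspDamped W D α β γ)^[k] s₀.1 := by
    intro s₀ k
    induction k with
    | zero => simp
    | succ m ih =>
      rw [Function.iterate_succ_apply', Function.iterate_succ_apply', ← ih]
  refine ⟨hDS, fun s _ => hfix s, sstar.1, (hmemS _).mp sstar.2, (hfix _).mp hfp,
    ?_, ?_⟩
  · intro s' hs' hfix'
    have hfp' : f ⟨s', (hmemS _).mpr hs'⟩ = ⟨s', (hmemS _).mpr hs'⟩ := by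
      apply Subtype.ext
      exact (hfix s').mpr hfix'
    have := hC.fixedPoint_unique hfp'
    rw [← hsstar] at this
    exact congrArg Subtype.val this
  · intro s₀ hs₀
    have h := hC.tendsto_iterate_fixedPoint ⟨s₀, (hmemS _).mpr hs₀⟩
    rw [← hsstar] at h
    have h2 : Filter.Tendsto (fun k => (f^[k] ⟨s₀, (hmemS _).mpr hs₀⟩).1)
        Filter.atTop (nhds sstar.1) :=
      (continuous_subtype_val.continuousAt.tendsto).comp h
    simpa only [hiter] using h2
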